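/- Let (X, B, μ, T) be a measure-preserving system, A ∈ B, and ε > 0. Then the set {n ∈ ℤ : μ(A ∩ T^{−n}A) > μ(A)² − ε} is syndetic. -/

import Mathlib

open MeasureTheory


/-- A set `S ⊆ ℤ` is syndetic: it has bounded gaps. -/
def SyndeticZ (S : Set ℤ) : Prop :=
  ∃ M : ℕ, 0 < M ∧ ∀ n : ℤ, ∃ s ∈ S, n ≤ s ∧ s < n + M

private lemma zpow_mp {X : Type*} [MeasurableSpace X] (μ : Measure X)
    (T : X ≃ᵐ X) (hT : MeasurePreserving T μ μ) (n : ℤ) :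
    MeasurePreserving ((T.toEquiv ^ n : Equiv.Perm X) : X → X) μ μ := by
  induction n using Int.induction_on with
  | zero => simpa using MeasurePreserving.id μ
  | succ k ih =>
      have h : ((T.toEquiv ^ ((k:ℤ)+1) : Equiv.Perm X) : X → X)
          = ((T.toEquiv ^ (k:ℤ) : Equiv.Perm X) : X → X) ∘ T := by
        rw [zpow_add_one]; rfl
      rw [h]; exact ih.comp hT
  | pred k ih =>
      have h : ((T.toEquiv ^ (-(k:ℤ)-1) : Equiv.Perm X) : X → X)
          = ((T.toEquiv ^ (-(k:ℤ)) : Equiv.Perm X) : X → X) ∘ T.symm := by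
        rw [zpow_sub_one]; rfl
      rw [h]; exact ih.comp (hT.symm T)

private lemma shift_eq {X : Type*} [MeasurableSpace X] (μ : Measure X)
    (T : X ≃ᵐ X) (hT : MeasurePreserving T μ μ) (A : Set X) (hA : MeasurableSet A)
    (a b : ℤ) :
    μ (((T.toEquiv ^ a : Equiv.Perm X) : X → X) ⁻¹' A ∩
        ((T.toEquiv ^ b : Equiv.Perm X) : X → X) ⁻¹' A)
      = μ (A ∩ ((T.toEquiv ^ (b - a) : Equiv.Perm X) : X → X) ⁻¹' A) := by
  have hmeas : MeasurableSet (A ∩ ((T.toEquiv ^ (b - a) : Equiv.Perm X) : X → X) ⁻¹' A) :=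
    hA.inter ((zpow_mp μ T hT (b - a)).measurable hA)
  have h := (zpow_mp μ T hT a).measure_preimage hmeas.nullMeasurableSet
  rw [← h, Set.preimage_inter, Set.preimage_preimage]
  congr 1
  have : (fun x => (T.toEquiv ^ (b - a) : Equiv.Perm X) ((T.toEquiv ^ a : Equiv.Perm X) x))
      = ((T.toEquiv ^ b : Equiv.Perm X) : X → X) := by
    funext x
    rw [← Equiv.Perm.mul_apply, ← zpow_add, sub_add_cancel]
  rw [this]

private lemma sum_lower {X : Type*} [MeasurableSpace X] (μ : Measure X) [IsProbabilityMeasure μ]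
    (N : ℕ) (B : Fin N → Set X) (hB : ∀ i, MeasurableSet (B i)) (α : ℝ)
    (hμB : ∀ i, (μ (B i)).toReal = α) :
    ((N : ℝ) * α) ^ 2 ≤ ∑ i, ∑ j, (μ (B i ∩ B j)).toReal := by
  set f : X → ℝ := fun x => ∑ i, (B i).indicator (fun _ => (1:ℝ)) x with hf
  have hfint : Integrable f μ :=
    integrable_finset_sum _ fun i _ => (integrable_const (1:ℝ)).indicator (hB i)
  have hIf : ∫ x, f x ∂μ = (N : ℝ) * α := by
    rw [hf, integral_finset_sum _ fun i _ => (integrable_const (1:ℝ)).indicator (hB i)]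
    simp [integral_indicator_const (1:ℝ) (hB _), hμB, Finset.card_univ]
    simp only [measureReal_def, hμB, Finset.sum_const, Finset.card_univ, Fintype.card_fin, nsmul_eq_mul]
  have hff : (fun x => f x * f x)
      = fun x => ∑ i, ∑ j, (B i ∩ B j).indicator (fun _ => (1:ℝ)) x := by
    funext x
    rw [hf]
    rw [Finset.sum_mul_sum]
    refine Finset.sum_congr rfl fun i _ => Finset.sum_congr rfl fun j _ => ?_
    by_cases hi : x ∈ B i <;> by_cases hj : x ∈ B j <;>
      simp [Set.indicator_apply, hi, hj]
  have hffint : Integrable (fun x => f x * f x) μ := by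
    rw [hff]
    exact integrable_finset_sum _ fun i _ => integrable_finset_sum _
      fun j _ => (integrable_const (1:ℝ)).indicator ((hB i).inter (hB j))
  have hIff : ∫ x, f x * f x ∂μ = ∑ i, ∑ j, (μ (B i ∩ B j)).toReal := by
    rw [hff, integral_finset_sum _ fun i _ => integrable_finset_sum _
      fun j _ => (integrable_const (1:ℝ)).indicator ((hB i).inter (hB j))]
    refine Finset.sum_congr rfl fun i _ => ?_
    rw [integral_finset_sum _ fun j _ => (integrable_const (1:ℝ)).indicator ((hB i).inter (hB j))]
    refine Finset.sum_congr rfl fun j _ => ?_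
    rw [integral_indicator_const (1:ℝ) ((hB i).inter (hB j))]
    simp
    rfl
  set c : ℝ := (N : ℝ) * α with hc
  have h0 : 0 ≤ ∫ x, (f x - c)^2 ∂μ := integral_nonneg fun x => sq_nonneg _
  have hexp : ∫ x, (f x - c)^2 ∂μ = (∫ x, f x * f x ∂μ) - 2*c*(∫ x, f x ∂μ) + c^2 := by
    have he : ∀ x, (f x - c)^2 = f x * f x - (2*c) * f x + c^2 := fun x => by ring
    simp_rw [he]
    have h1 : ∫ x, (f x * f x - 2*c*f x + c^2) ∂μ
        = ∫ x, (f x * f x - 2*c*f x) ∂μ + ∫ _x, (c^2 : ℝ) ∂μ :=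
      integral_add (hffint.sub (hfint.const_mul _)) (integrable_const _)
    have h2 : ∫ x, (f x * f x - 2*c*f x) ∂μ
        = ∫ x, f x * f x ∂μ - ∫ x, 2*c*f x ∂μ := integral_sub hffint (hfint.const_mul _)
    have h3 : ∫ x, 2*c*f x ∂μ = 2*c*∫ x, f x ∂μ := integral_const_mul _ _
    rw [h1, h2, h3, integral_const]
    simp
  rw [hIf, hIff] at hexp
  rw [hexp] at h0
  nlinarith [h0]

private lemma arith_contra (Nr α ε : ℝ) (hN2 : 2 ≤ Nr) (hNe : 1 + ε ≤ (Nr - 1) * ε)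
    (hε : 0 < ε)
    (hmain : (Nr * α) ^ 2 ≤ Nr * α + Nr * (Nr - 1) * (α ^ 2 - ε)) : False := by
  nlinarith [mul_le_mul_of_nonneg_left hNe (by linarith : (0:ℝ) ≤ Nr),
    mul_nonneg (by linarith : (0:ℝ) ≤ Nr) (sq_nonneg (1 - 2*α)), hmain, hε, hN2]

private lemma exists_pair {X : Type*} [MeasurableSpace X] (μ : Measure X)
    [IsProbabilityMeasure μ] (T : X ≃ᵐ X) (hT : MeasurePreserving T μ μ)
    (A : Set X) (hA : MeasurableSet A) (ε : ℝ) (hε : 0 < ε)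
    (n : Fin (Nat.ceil ε⁻¹ + 2) → ℤ) :
    ∃ i j, i ≠ j ∧ (μ A).toReal ^ 2 - ε <
      (μ (A ∩ ((T.toEquiv ^ (n j - n i) : Equiv.Perm X) : X → X) ⁻¹' A)).toReal := by
  by_contra hcon
  push_neg at hcon
  let N : ℕ := Nat.ceil ε⁻¹ + 2
  let α : ℝ := (μ A).toReal
  let B : Fin N → Set X := fun i => ((T.toEquiv ^ (n i) : Equiv.Perm X) : X → X) ⁻¹' A
  have hBm : ∀ i, MeasurableSet (B i) := fun i => (zpow_mp μ T hT (n i)).measurable hA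
  have hμB : ∀ i, (μ (B i)).toReal = α := fun i =>
    congrArg ENNReal.toReal ((zpow_mp μ T hT (n i)).measure_preimage hA.nullMeasurableSet)
  have hlow := sum_lower μ N B hBm α hμB
  have hup : ∑ i, ∑ j, (μ (B i ∩ B j)).toReal
      ≤ (N:ℝ) * α + (N:ℝ) * ((N:ℝ) - 1) * (α^2 - ε) := by
    have hb : ∀ i j : Fin N, (μ (B i ∩ B j)).toReal
        ≤ if i = j then α else α^2 - ε := by
      intro i j
      by_cases hij : i = j
      · subst hij; simp [Set.inter_self, hμB i]
      · have := hcon i j hij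
        rw [shift_eq μ T hT A hA (n i) (n j)]
        simpa [hij] using this
    calc ∑ i, ∑ j, (μ (B i ∩ B j)).toReal
        ≤ ∑ i : Fin N, ∑ j : Fin N, (if i = j then α else α^2 - ε) :=
          Finset.sum_le_sum fun i _ => Finset.sum_le_sum fun j _ => hb i j
      _ = (N:ℝ) * α + (N:ℝ) * ((N:ℝ) - 1) * (α^2 - ε) := by
          have hin : ∀ i : Fin N, ∑ j : Fin N, (if i = j then α else α^2 - ε)
              = α + ((N:ℝ) - 1) * (α^2 - ε) := by
            intro i
            have : ∀ j : Fin N, (if i = j then α else α^2 - ε)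
                = (α^2 - ε) + (if i = j then α - (α^2 - ε) else 0) := by
              intro j; by_cases h : i = j <;> simp [h]
            rw [Finset.sum_congr rfl fun j _ => this j, Finset.sum_add_distrib,
              Finset.sum_ite_eq]
            simp [Finset.card_univ]
            ring
          rw [Finset.sum_congr rfl fun i _ => hin i]
          simp [Finset.card_univ]
          ring
  have hNe : 1 + ε ≤ ((N:ℝ) - 1) * ε := by
    have h1 : ε⁻¹ ≤ (Nat.ceil ε⁻¹ : ℝ) := Nat.le_ceil _
    have h2 : (N : ℝ) - 1 = (Nat.ceil ε⁻¹ : ℝ) + 1 := by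
      show ((Nat.ceil ε⁻¹ + 2 : ℕ) : ℝ) - 1 = _
      push_cast; ring
    rw [h2]
    have h3 : (ε⁻¹ + 1) * ε ≤ ((Nat.ceil ε⁻¹ : ℝ) + 1) * ε :=
      mul_le_mul_of_nonneg_right (by linarith) hε.le
    calc 1 + ε = (ε⁻¹ + 1) * ε := by field_simp
      _ ≤ _ := h3
  have hN2 : (2:ℝ) ≤ (N:ℝ) := by
    have : (2:ℕ) ≤ N := Nat.le_add_left 2 _
    exact_mod_cast this
  exact arith_contra (N:ℝ) α ε hN2 hNe hε (le_trans hlow hup)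

/-- Khintchine–Bergelson: in an invertible measure-preserving system, for any measurable
`A` and `ε > 0`, the set `{n ∈ ℤ : μ(A ∩ T⁻ⁿA) > μ(A)² − ε}` is syndetic. -/
theorem khintchine_bergelson_syndetic {X : Type*} [MeasurableSpace X]
    (μ : MeasureTheory.Measure X) [MeasureTheory.IsProbabilityMeasure μ]
    (T : X ≃ᵐ X) (hT : MeasureTheory.MeasurePreserving T μ μ)
    (A : Set X) (hA : MeasurableSet A) (ε : ℝ) (hε : 0 < ε) :
    SyndeticZ {n : ℤ | (μ A).toReal ^ 2 - ε <
      (μ (A ∩ ((T.toEquiv ^ n : Equiv.Perm X) : X → X) ⁻¹' A)).toReal} := by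
  set S : Set ℤ := {n : ℤ | (μ A).toReal ^ 2 - ε <
      (μ (A ∩ ((T.toEquiv ^ n : Equiv.Perm X) : X → X) ⁻¹' A)).toReal} with hS
  by_contra hns
  rw [SyndeticZ] at hns
  push_neg at hns
  -- symmetry of S
  have hsym : ∀ s : ℤ, s ∉ S → -s ∉ S := by
    intro s hs hmem
    apply hs
    have h := shift_eq μ T hT A hA s 0
    rw [zero_sub] at h
    simp only [zpow_zero, Equiv.Perm.coe_one, Set.preimage_id] at h
    rw [hS, Set.mem_setOf_eq] at hmem ⊢
    rw [← h, Set.inter_comm] at hmem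
    exact hmem
  -- construct arbitrarily long difference-avoiding sequences
  have key : ∀ k : ℕ, ∃ f : Fin (k+1) → ℤ, ∀ i j, i ≠ j → f j - f i ∉ S := by
    intro k
    induction k with
    | zero =>
      refine ⟨fun _ => 0, fun i j hij => absurd ?_ hij⟩
      have hi := i.isLt; have hj := j.isLt
      exact Fin.ext (by omega)
    | succ k ih =>
      obtain ⟨f, hf⟩ := ih
      have hsne : (Finset.univ.image f).Nonempty :=
        ⟨f 0, Finset.mem_image_of_mem f (Finset.mem_univ 0)⟩
      set mx := (Finset.univ.image f).max' hsne with hmx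
      set mn := (Finset.univ.image f).min' hsne with hmn
      have hmnmx : mn ≤ mx := Finset.min'_le _ _ (Finset.max'_mem _ _)
      set M : ℕ := (mx - mn).toNat + 1 with hMdef
      obtain ⟨a, ha⟩ := hns M (Nat.succ_pos _)
      have hMz : (M : ℤ) = (mx - mn) + 1 := by
        rw [hMdef]; push_cast [Int.toNat_of_nonneg (sub_nonneg.2 hmnmx)]; ring
      refine ⟨Fin.snoc f (a + mx), fun i j hij => ?_⟩
      have hgap : ∀ x : ℤ, a ≤ x → x < a + M → x ∉ S := by
        intro x h1 h2 hx
        have := ha x hx h1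
        omega
      have hnewold : ∀ i' : Fin (k+1), (a + mx) - f i' ∉ S := by
        intro i'
        have hm1 : f i' ≤ mx := Finset.le_max' _ _ (Finset.mem_image_of_mem f (Finset.mem_univ i'))
        have hm2 : mn ≤ f i' := Finset.min'_le _ _ (Finset.mem_image_of_mem f (Finset.mem_univ i'))
        exact hgap _ (by linarith) (by rw [hMz]; linarith)
      induction j using Fin.lastCases with
      | last =>
        induction i using Fin.lastCases with
        | last => exact absurd rfl hij
        | cast i' =>
          rw [Fin.snoc_last, Fin.snoc_castSucc]
          exact hnewold i'
      | cast j' =>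
        induction i using Fin.lastCases with
        | last =>
          rw [Fin.snoc_last, Fin.snoc_castSucc]
          have : f j' - (a + mx) = -((a + mx) - f j') := by ring
          rw [this]
          exact hsym _ (hnewold j')
        | cast i' =>
          rw [Fin.snoc_castSucc, Fin.snoc_castSucc]
          exact hf i' j' (fun h => hij (by rw [h]))
  obtain ⟨f, hf⟩ := key (Nat.ceil ε⁻¹ + 1)
  obtain ⟨i, j, hij, hgt⟩ := exists_pair μ T hT A hA ε hε f
  exact hf i j hij hgt
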